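/- Let X ∈ M_{n×p} have singular value decomposition X = UΣV* with Σ = diag(σ_1,…,σ_n), and let ε > 0. Then the unique minimizer of 𝒥(X,W) = ½(‖W^{1/2}X‖_F² + ‖W^{−1/2}‖_F²) over the set {W ∈ M_{n×n} : W Hermitian, 0 ≺ W ⪯ ε^{−1}I} is W̄ = U Σ_ε^{−1} U*, where Σ_ε = diag(max{σ_j, ε}). -/

import Mathlib

open Matrix
open scoped ComplexOrder

namespace IRLSM

/-- Frobenius inner product `⟨X,Y⟩ = Tr(X Yᴴ)`. -/
noncomputable def frobInner {n p : ℕ} (X Y : Matrix (Fin n) (Fin p) ℂ) : ℂ :=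
  Matrix.trace (X * Yᴴ)

/-- Frobenius norm. -/
noncomputable def frobNorm {n p : ℕ} (X : Matrix (Fin n) (Fin p) ℂ) : ℝ :=
  Real.sqrt (∑ i, ∑ j, Complex.normSq (X i j))

/-- Singular values of `X` in nonincreasing order, `sv X 0 = σ₁ ≥ sv X 1 = σ₂ ≥ …`;
indices `≥ n` give `0`. -/
noncomputable def sv {n p : ℕ} (X : Matrix (Fin n) (Fin p) ℂ) : ℕ → ℝ :=
  fun i => ((List.ofFn fun j : Fin n =>
      Real.sqrt ((Matrix.isHermitian_mul_conjTranspose_self X).eigenvalues j)).mergeSort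
      (fun a b => decide (b ≤ a))).getD i 0

/-- Nuclear norm `‖X‖_* = ∑ σᵢ(X)`. -/
noncomputable def nuclearNorm {n p : ℕ} (X : Matrix (Fin n) (Fin p) ℂ) : ℝ :=
  ∑ i : Fin n, sv X (i : ℕ)

/-- Positive square root of a positive semidefinite matrix (junk value `0` otherwise). -/
noncomputable def matSqrt {n : ℕ} (W : Matrix (Fin n) (Fin n) ℂ) : Matrix (Fin n) (Fin n) ℂ :=
  @dite _ W.PosSemidef (Classical.dec _) (fun h => h.1.eigenvectorUnitary.1 *
    diagonal ((↑) ∘ (√·) ∘ h.1.eigenvalues) * (star h.1.eigenvectorUnitary : Matrix (Fin n) (Fin n) ℂ)) (fun _ => 0)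

/-- The functional `𝒥(X,W) = ½(‖W^{1/2}X‖_F² + ‖W^{-1/2}‖_F²)`. -/
noncomputable def Jfun {n p : ℕ} (X : Matrix (Fin n) (Fin p) ℂ)
    (W : Matrix (Fin n) (Fin n) ℂ) : ℝ :=
  (frobNorm (matSqrt W * X) ^ 2 + frobNorm (matSqrt W⁻¹) ^ 2) / 2

/-- The restricted isometry constant `δ_k(𝒮)`: the smallest `δ ≥ 0` such that
`(1-δ)‖X‖_F² ≤ ‖𝒮(X)‖² ≤ (1+δ)‖X‖_F²` for all `X` of rank at most `k`. -/
noncomputable def ripConst {n p m : ℕ}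
    (S : Matrix (Fin n) (Fin p) ℂ →ₗ[ℂ] (Fin m → ℂ)) (k : ℕ) : ℝ :=
  sInf {δ : ℝ | 0 ≤ δ ∧ ∀ X : Matrix (Fin n) (Fin p) ℂ, X.rank ≤ k →
    (1 - δ) * frobNorm X ^ 2 ≤ ∑ i, Complex.normSq (S X i) ∧
      ∑ i, Complex.normSq (S X i) ≤ (1 + δ) * frobNorm X ^ 2}

/-- The rank null space property of order `k`. -/
def RNSP {n p m : ℕ} (S : Matrix (Fin n) (Fin p) ℂ →ₗ[ℂ] (Fin m → ℂ)) (k : ℕ) : Prop :=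
  ∀ H : Matrix (Fin n) (Fin p) ℂ, S H = 0 → H ≠ 0 →
    ∀ H₁ H₂ : Matrix (Fin n) (Fin p) ℂ, H = H₁ + H₂ → H₁.rank ≤ k →
      nuclearNorm H₁ < nuclearNorm H₂

/-- The strong rank null space property of order `k` with constant `η`. -/
def SRNSP {n p m : ℕ} (S : Matrix (Fin n) (Fin p) ℂ →ₗ[ℂ] (Fin m → ℂ)) (k : ℕ) (η : ℝ) : Prop :=
  ∀ X : Matrix (Fin n) (Fin p) ℂ, S X = 0 → X ≠ 0 →
    ∀ X₁ X₂ : Matrix (Fin n) (Fin p) ℂ, X = X₁ + X₂ → X₁.rank ≤ k →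
      ∃ H₁ H₂ : Matrix (Fin n) (Fin p) ℂ, X = H₁ + H₂ ∧ H₁.rank ≤ 2 * k ∧
        frobInner H₁ H₂ = 0 ∧ X₁ * H₂ᴴ = 0 ∧ X₁ᴴ * H₂ = 0 ∧
        nuclearNorm H₁ ≤ η * nuclearNorm H₂

/-- Best `k`-rank approximation error in the nuclear norm, `ρ_k(X)_*`. -/
noncomputable def rhoNuc {n p : ℕ} (k : ℕ) (X : Matrix (Fin n) (Fin p) ℂ) : ℝ :=
  sInf ((fun Z => nuclearNorm (X - Z)) '' {Z : Matrix (Fin n) (Fin p) ℂ | Z.rank ≤ k})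

/-- `j^ε(u) = |u|` for `|u| ≥ ε` and `(u² + ε²)/(2ε)` otherwise. -/
noncomputable def jeps (ε u : ℝ) : ℝ :=
  if ε ≤ |u| then |u| else (u ^ 2 + ε ^ 2) / (2 * ε)

/-- The functional `𝒥_ε(X) = ∑ᵢ j^ε(σᵢ(X))`. -/
noncomputable def Jeps {n p : ℕ} (ε : ℝ) (X : Matrix (Fin n) (Fin p) ℂ) : ℝ :=
  ∑ i : Fin n, jeps ε (sv X (i : ℕ))

/-- `(X^ℓ, W^ℓ, ε_ℓ)_ℓ` is an output of the IRLS-M algorithm with measurement map `S`,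
data `M`, parameters `γ > 0` and `K`.  Here `X (ℓ+1)` is the weighted least squares
minimizer for the weight `W ℓ`, `ε (ℓ+1) = min (ε ℓ) (γ σ_{K+1}(X^{ℓ+1}))`, and
`W (ℓ+1)` is built from an eigendecomposition of `X^{ℓ+1}(X^{ℓ+1})ᴴ` together with the
`ε`-stabilization of the singular values.  If `ε` reaches `0` the algorithm stops. -/
structure IsIRLSM {n p m : ℕ} (S : Matrix (Fin n) (Fin p) ℂ →ₗ[ℂ] (Fin m → ℂ))
    (M : Fin m → ℂ) (γ : ℝ) (K : ℕ)
    (X : ℕ → Matrix (Fin n) (Fin p) ℂ)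
    (W : ℕ → Matrix (Fin n) (Fin n) ℂ)
    (ε : ℕ → ℝ) : Prop where
  w_init : W 0 = 1
  eps_init : ε 0 = 1
  x_feasible : ∀ ℓ : ℕ, ε ℓ ≠ 0 → S (X (ℓ + 1)) = M
  x_min : ∀ ℓ : ℕ, ε ℓ ≠ 0 → ∀ Y : Matrix (Fin n) (Fin p) ℂ, S Y = M →
    frobNorm (matSqrt (W ℓ) * X (ℓ + 1)) ^ 2 ≤ frobNorm (matSqrt (W ℓ) * Y) ^ 2
  eps_update : ∀ ℓ : ℕ, ε ℓ ≠ 0 → ε (ℓ + 1) = min (ε ℓ) (γ * sv (X (ℓ + 1)) K)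
  w_update : ∀ ℓ : ℕ, ε ℓ ≠ 0 → ε (ℓ + 1) ≠ 0 →
    ∃ U : Matrix (Fin n) (Fin n) ℂ, U * Uᴴ = 1 ∧ Uᴴ * U = 1 ∧
      X (ℓ + 1) * (X (ℓ + 1))ᴴ =
        U * Matrix.diagonal (fun i : Fin n => ((sv (X (ℓ + 1)) (i : ℕ) : ℂ)) ^ 2) * Uᴴ ∧
      W (ℓ + 1) =
        U * Matrix.diagonal
            (fun i : Fin n => (((max (sv (X (ℓ + 1)) (i : ℕ)) (ε (ℓ + 1)) : ℝ) : ℂ))⁻¹) * Uᴴ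
  w_stop : ∀ ℓ : ℕ, ε ℓ ≠ 0 → ε (ℓ + 1) = 0 → W (ℓ + 1) = W ℓ
  stopped : ∀ ℓ : ℕ, ε ℓ = 0 → X (ℓ + 1) = X ℓ ∧ W (ℓ + 1) = W ℓ ∧ ε (ℓ + 1) = 0

lemma frobNorm_sq {n p : ℕ} (Y : Matrix (Fin n) (Fin p) ℂ) :
    frobNorm Y ^ 2 = (Matrix.trace (Y * Yᴴ)).re := by
  have h : Matrix.trace (Y * Yᴴ) = ((∑ i, ∑ j, Complex.normSq (Y i j) : ℝ) : ℂ) := by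
    push_cast
    simp [Matrix.trace, Matrix.diag, Matrix.mul_apply, Matrix.conjTranspose_apply,
      Complex.mul_conj]
  rw [frobNorm, Real.sq_sqrt (Finset.sum_nonneg fun i _ => Finset.sum_nonneg fun j _ =>
    Complex.normSq_nonneg (Y i j)), h, Complex.ofReal_re]

lemma frobNorm_eq_zero {n p : ℕ} {Y : Matrix (Fin n) (Fin p) ℂ}
    (h : (Matrix.trace (Y * Yᴴ)).re = 0) : Y = 0 := by
  rw [← frobNorm_sq, frobNorm, Real.sq_sqrt (Finset.sum_nonneg fun i _ =>
    Finset.sum_nonneg fun j _ => Complex.normSq_nonneg (Y i j))] at h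
  ext i j
  have h1 := (Finset.sum_eq_zero_iff_of_nonneg (fun i _ => Finset.sum_nonneg
    (fun j _ => Complex.normSq_nonneg (Y i j)))).mp h i (Finset.mem_univ i)
  have h2 := (Finset.sum_eq_zero_iff_of_nonneg
    (fun j _ => Complex.normSq_nonneg (Y i j))).mp h1 j (Finset.mem_univ j)
  simpa [Complex.normSq_eq_zero] using h2

lemma matSqrt_mul_self {n : ℕ} {W : Matrix (Fin n) (Fin n) ℂ} (hW : W.PosSemidef) :
    matSqrt W * matSqrt W = W := by
  rw [matSqrt, dif_pos hW]
  conv_rhs => rw [hW.1.spectral_theorem, Unitary.conjStarAlgAut_apply]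
  set Q := hW.1.eigenvectorUnitary
  set D : Matrix (Fin n) (Fin n) ℂ := diagonal ((↑) ∘ (√·) ∘ hW.1.eigenvalues)
  have hUU : (star Q : Matrix (Fin n) (Fin n) ℂ) * Q.1 = 1 := by simp
  have hD : D * D = (diagonal (RCLike.ofReal ∘ hW.1.eigenvalues) : Matrix (Fin n) (Fin n) ℂ) := by
    rw [diagonal_mul_diagonal]; congr 1; funext i
    simp only [Function.comp_apply]
    rw [← Complex.ofReal_mul, Real.mul_self_sqrt (hW.eigenvalues_nonneg i)]; rfl
  rw [show Q.1 * D * (star Q : Matrix (Fin n) (Fin n) ℂ) * (Q.1 * D * (star Q : Matrix (Fin n) (Fin n) ℂ))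
      = Q.1 * (D * ((star Q : Matrix (Fin n) (Fin n) ℂ) * Q.1) * D) * (star Q : Matrix (Fin n) (Fin n) ℂ) by
    simp only [Matrix.mul_assoc], hUU, Matrix.mul_one, hD]

lemma matSqrt_herm {n : ℕ} {W : Matrix (Fin n) (Fin n) ℂ} (hW : W.PosSemidef) :
    (matSqrt W)ᴴ = matSqrt W := by
  rw [matSqrt, dif_pos hW]
  have hs : star (Complex.ofReal ∘ (fun x => √x) ∘ hW.1.eigenvalues) =
      Complex.ofReal ∘ (fun x => √x) ∘ hW.1.eigenvalues := by
    funext i; simp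
  simp [Matrix.conjTranspose_mul, Matrix.mul_assoc, Matrix.diagonal_conjTranspose, hs,
    Matrix.star_eq_conjTranspose]

lemma Jfun_eq {n p : ℕ} (X : Matrix (Fin n) (Fin p) ℂ) {W : Matrix (Fin n) (Fin n) ℂ}
    (hW : W.PosDef) :
    Jfun X W = ((Matrix.trace (W * (X * Xᴴ))).re + (Matrix.trace W⁻¹).re) / 2 := by
  have hW' := hW.posSemidef
  have hWi := hW.inv.posSemidef
  rw [Jfun, frobNorm_sq, frobNorm_sq]
  congr 2
  · rw [Matrix.conjTranspose_mul, matSqrt_herm hW']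
    rw [show matSqrt W * X * (Xᴴ * matSqrt W) = matSqrt W * (X * Xᴴ) * matSqrt W by
      simp [Matrix.mul_assoc]]
    rw [Matrix.trace_mul_cycle, ← Matrix.mul_assoc, matSqrt_mul_self hW', Matrix.mul_assoc]
  · rw [matSqrt_herm hWi, matSqrt_mul_self hWi]

lemma posDef_conj {n : ℕ} {A U : Matrix (Fin n) (Fin n) ℂ} (hA : A.PosDef)
    (hU : U * Uᴴ = 1) : (U * A * Uᴴ).PosDef := by
  rw [Matrix.posDef_iff_dotProduct_mulVec]
  constructor
  · have := hA.isHermitian.eq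
    simp only [Matrix.IsHermitian, Matrix.conjTranspose_mul, Matrix.conjTranspose_conjTranspose,
      this]
    rw [Matrix.mul_assoc]
  · intro x hx
    have hx' : Uᴴ *ᵥ x ≠ 0 := by
      intro h
      apply hx
      have := congrArg (fun v => U *ᵥ v) h
      simpa [Matrix.mulVec_mulVec, hU] using this
    have h2 := hA.dotProduct_mulVec_pos hx'
    have key : star x ⬝ᵥ ((U * A * Uᴴ) *ᵥ x) = star (Uᴴ *ᵥ x) ⬝ᵥ (A *ᵥ (Uᴴ *ᵥ x)) := by
      rw [← Matrix.mulVec_mulVec, ← Matrix.mulVec_mulVec, Matrix.dotProduct_mulVec,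
        Matrix.star_mulVec, Matrix.conjTranspose_conjTranspose, ← Matrix.dotProduct_mulVec]
    rw [key]; exact h2

lemma psd_diag_re_nonneg {n : ℕ} {B : Matrix (Fin n) (Fin n) ℂ} (hB : B.PosSemidef)
    (i : Fin n) : 0 ≤ (B i i).re := by
  have h := hB.dotProduct_mulVec_nonneg (Pi.single i 1)
  have he : star (Pi.single i 1 : Fin n → ℂ) ⬝ᵥ (B *ᵥ Pi.single i 1) = B i i := by
    simp [dotProduct, Matrix.mulVec, Pi.single_apply]
  rw [he] at h
  exact (Complex.le_def.mp h).1

lemma trace_mul_diag {n : ℕ} (G : Matrix (Fin n) (Fin n) ℂ) (d : Fin n → ℂ) :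
    Matrix.trace (G * Matrix.diagonal d) = ∑ i, G i i * d i := by
  simp [Matrix.trace, Matrix.diag, Matrix.mul_apply, Matrix.diagonal_apply, Finset.mul_sum]

lemma sigma_mul_sigma_conj {n p : ℕ} (hnp : n ≤ p) (σ : Fin n → ℝ) :
    (Matrix.of fun (i : Fin n) (j : Fin p) => if (i : ℕ) = (j : ℕ) then (σ i : ℂ) else 0) *
      (Matrix.of fun (i : Fin n) (j : Fin p) =>
        if (i : ℕ) = (j : ℕ) then (σ i : ℂ) else 0)ᴴ =
      Matrix.diagonal (fun i => ((σ i : ℂ)) ^ 2) := by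
  ext i k
  rw [Matrix.mul_apply]
  rw [Finset.sum_eq_single (⟨(i : ℕ), lt_of_lt_of_le i.2 hnp⟩ : Fin p)]
  · simp only [Matrix.of_apply, Matrix.conjTranspose_apply, Matrix.diagonal_apply]
    by_cases h : k = i
    · subst h
      simp [pow_two]
    · have h1 : ¬ ((k : ℕ) = (i : ℕ)) := fun hh => h (Fin.ext hh)
      simp [h1, Ne.symm h]
  · intro j _ hj
    have : ¬ ((i : ℕ) = (j : ℕ)) := by
      intro hh
      exact hj (Fin.ext hh.symm)
    simp [this]
  · intro h
    exact absurd (Finset.mem_univ _) h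

lemma inv_sub_identity {n : ℕ} {W B : Matrix (Fin n) (Fin n) ℂ}
    (hW1 : W * W⁻¹ = 1) (hW2 : W⁻¹ * W = 1) (hB1 : B * B⁻¹ = 1) (hB2 : B⁻¹ * B = 1) :
    W⁻¹ - B⁻¹ =
      -(B⁻¹ * (W - B) * B⁻¹) + B⁻¹ * (W - B) * W⁻¹ * ((W - B) * B⁻¹) := by
  have hW1' : ∀ Z : Matrix (Fin n) (Fin n) ℂ, W * (W⁻¹ * Z) = Z := fun Z => by
    rw [← Matrix.mul_assoc, hW1, Matrix.one_mul]
  have hW2' : ∀ Z : Matrix (Fin n) (Fin n) ℂ, W⁻¹ * (W * Z) = Z := fun Z => by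
    rw [← Matrix.mul_assoc, hW2, Matrix.one_mul]
  have hB1' : ∀ Z : Matrix (Fin n) (Fin n) ℂ, B * (B⁻¹ * Z) = Z := fun Z => by
    rw [← Matrix.mul_assoc, hB1, Matrix.one_mul]
  have hB2' : ∀ Z : Matrix (Fin n) (Fin n) ℂ, B⁻¹ * (B * Z) = Z := fun Z => by
    rw [← Matrix.mul_assoc, hB2, Matrix.one_mul]
  simp only [Matrix.mul_sub, Matrix.sub_mul, Matrix.mul_assoc, hW1, hW2, hB1, hB2,
    hW1', hW2', hB1', hB2', Matrix.mul_one, Matrix.one_mul]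
  abel



lemma conj_mul_conj {n : ℕ} {U : Matrix (Fin n) (Fin n) ℂ} (hU' : Uᴴ * U = 1)
    (A B : Matrix (Fin n) (Fin n) ℂ) :
    (U * A * Uᴴ) * (U * B * Uᴴ) = U * (A * B) * Uᴴ := by
  have hUU : ∀ Z : Matrix (Fin n) (Fin n) ℂ, Uᴴ * (U * Z) = Z := fun Z => by
    rw [← Matrix.mul_assoc, hU', Matrix.one_mul]
  simp only [Matrix.mul_assoc, hUU]

lemma unconj {n : ℕ} {U : Matrix (Fin n) (Fin n) ℂ} (hU' : Uᴴ * U = 1)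
    (A : Matrix (Fin n) (Fin n) ℂ) :
    Uᴴ * (U * A * Uᴴ) * U = A := by
  have hUU : ∀ Z : Matrix (Fin n) (Fin n) ℂ, Uᴴ * (U * Z) = Z := fun Z => by
    rw [← Matrix.mul_assoc, hU', Matrix.one_mul]
  simp only [Matrix.mul_assoc, hUU, hU', Matrix.mul_one]

set_option maxHeartbeats 1000000 in
/-- `W̄ = U Σ_ε⁻¹ U*` is the unique minimizer of `𝒥(X,·)` over
`{W : 0 ≺ W = W* ⪯ ε⁻¹ I}`. -/
theorem statement4 {n p : ℕ} (hnp : n ≤ p) (ε : ℝ) (hε : 0 < ε)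
    (X : Matrix (Fin n) (Fin p) ℂ)
    (U : Matrix (Fin n) (Fin n) ℂ) (hU : U * Uᴴ = 1) (hU' : Uᴴ * U = 1)
    (V : Matrix (Fin p) (Fin p) ℂ) (hV : V * Vᴴ = 1) (hV' : Vᴴ * V = 1)
    (σ : Fin n → ℝ) (hσ : ∀ i, 0 ≤ σ i)
    (hX : X = U * (Matrix.of fun (i : Fin n) (j : Fin p) =>
        if (i : ℕ) = (j : ℕ) then (σ i : ℂ) else 0) * Vᴴ) :
    (U * Matrix.diagonal (fun i : Fin n => ((max (σ i) ε : ℝ) : ℂ)⁻¹) * Uᴴ) ∈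
        {W : Matrix (Fin n) (Fin n) ℂ |
          W.PosDef ∧ (ε⁻¹ • (1 : Matrix (Fin n) (Fin n) ℂ) - W).PosSemidef} ∧
    (∀ W : Matrix (Fin n) (Fin n) ℂ,
        W.PosDef → (ε⁻¹ • (1 : Matrix (Fin n) (Fin n) ℂ) - W).PosSemidef →
        Jfun X (U * Matrix.diagonal (fun i : Fin n => ((max (σ i) ε : ℝ) : ℂ)⁻¹) * Uᴴ) ≤
          Jfun X W) ∧
    (∀ W : Matrix (Fin n) (Fin n) ℂ,
        W.PosDef → (ε⁻¹ • (1 : Matrix (Fin n) (Fin n) ℂ) - W).PosSemidef →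
        Jfun X W =
          Jfun X (U * Matrix.diagonal (fun i : Fin n => ((max (σ i) ε : ℝ) : ℂ)⁻¹) * Uᴴ) →
        W = U * Matrix.diagonal (fun i : Fin n => ((max (σ i) ε : ℝ) : ℂ)⁻¹) * Uᴴ) := by
  have hEε : ∀ i, ε ≤ max (σ i) ε := fun i => le_max_right _ _
  have hEpos : ∀ i, (0 : ℝ) < max (σ i) ε := fun i => lt_of_lt_of_le hε (hEε i)
  have hEne : ∀ i, ((max (σ i) ε : ℝ) : ℂ) ≠ 0 := fun i =>
    Complex.ofReal_ne_zero.mpr (ne_of_gt (hEpos i))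
  set Wb : Matrix (Fin n) (Fin n) ℂ :=
    U * Matrix.diagonal (fun i : Fin n => ((max (σ i) ε : ℝ) : ℂ)⁻¹) * Uᴴ with hWbdef
  -- positive definiteness of Wb
  have hdiagPD : (Matrix.diagonal (fun i : Fin n => ((max (σ i) ε : ℝ) : ℂ)⁻¹)).PosDef := by
    apply Matrix.PosDef.diagonal
    intro i
    rw [← Complex.ofReal_inv]
    exact Complex.zero_lt_real.mpr (inv_pos.mpr (hEpos i))
  have hWbPD : Wb.PosDef := posDef_conj hdiagPD hU
  -- Wb inverse
  have hWbinv : Wb⁻¹ = U * Matrix.diagonal (fun i : Fin n => ((max (σ i) ε : ℝ) : ℂ)) * Uᴴ := by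
    apply Matrix.inv_eq_right_inv
    rw [hWbdef, conj_mul_conj hU', Matrix.diagonal_mul_diagonal]
    rw [show (fun i : Fin n => ((max (σ i) ε : ℝ) : ℂ)⁻¹ * ((max (σ i) ε : ℝ) : ℂ)) =
        fun _ => (1 : ℂ) from funext fun i => inv_mul_cancel₀ (hEne i)]
    rw [Matrix.diagonal_one, Matrix.mul_one, hU]
  -- constraint feasibility for Wb
  have hconstWb : (ε⁻¹ • (1 : Matrix (Fin n) (Fin n) ℂ) - Wb).PosSemidef := by
    have h2 : ε⁻¹ • (1 : Matrix (Fin n) (Fin n) ℂ) -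
        Matrix.diagonal (fun i : Fin n => ((max (σ i) ε : ℝ) : ℂ)⁻¹) =
        Matrix.diagonal (fun i : Fin n => ((ε⁻¹ - (max (σ i) ε)⁻¹ : ℝ) : ℂ)) := by
      ext i j
      by_cases hij : i = j
      · subst hij
        simp only [Matrix.sub_apply, Matrix.smul_apply, Matrix.one_apply_eq,
          Matrix.diagonal_apply_eq, Complex.real_smul]
        push_cast
        ring
      · simp [Matrix.one_apply_ne hij, Matrix.diagonal_apply_ne _ hij, hij]
    have h1 : ε⁻¹ • (1 : Matrix (Fin n) (Fin n) ℂ) - Wb =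
        U * Matrix.diagonal (fun i : Fin n => ((ε⁻¹ - (max (σ i) ε)⁻¹ : ℝ) : ℂ)) * Uᴴ := by
      rw [← h2, Matrix.mul_sub, Matrix.sub_mul, ← hWbdef]
      congr 1
      rw [mul_smul_comm, smul_mul_assoc, Matrix.mul_one, hU]
    rw [h1]
    apply Matrix.PosSemidef.mul_mul_conjTranspose_same
    apply Matrix.PosSemidef.diagonal
    intro i
    simp only [Pi.zero_apply]
    rw [Complex.zero_le_real]
    have h3 : (max (σ i) ε)⁻¹ ≤ ε⁻¹ := inv_anti₀ hε (hEε i)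
    linarith
  -- spectral decomposition of X Xᴴ
  have hA : X * Xᴴ = U * Matrix.diagonal (fun i : Fin n => ((σ i : ℝ) : ℂ) ^ 2) * Uᴴ := by
    rw [hX]
    rw [Matrix.conjTranspose_mul, Matrix.conjTranspose_mul,
      Matrix.conjTranspose_conjTranspose]
    rw [Matrix.mul_assoc (U * _), ← Matrix.mul_assoc Vᴴ, hV', Matrix.one_mul,
      ← Matrix.mul_assoc, Matrix.mul_assoc U, sigma_mul_sigma_conj hnp σ]
  -- the main lemma
  have main : ∀ W : Matrix (Fin n) (Fin n) ℂ, W.PosDef →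
      (ε⁻¹ • (1 : Matrix (Fin n) (Fin n) ℂ) - W).PosSemidef →
      Jfun X Wb ≤ Jfun X W ∧ (Jfun X W = Jfun X Wb → W = Wb) := by
    intro W hWpd hWc
    have hW1 : W * W⁻¹ = 1 :=
      Matrix.mul_nonsing_inv W ((Matrix.isUnit_iff_isUnit_det W).mp hWpd.isUnit)
    have hW2 : W⁻¹ * W = 1 :=
      Matrix.nonsing_inv_mul W ((Matrix.isUnit_iff_isUnit_det W).mp hWpd.isUnit)
    have hB1 : Wb * Wb⁻¹ = 1 :=
      Matrix.mul_nonsing_inv Wb ((Matrix.isUnit_iff_isUnit_det Wb).mp hWbPD.isUnit)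
    have hB2 : Wb⁻¹ * Wb = 1 :=
      Matrix.nonsing_inv_mul Wb ((Matrix.isUnit_iff_isUnit_det Wb).mp hWbPD.isUnit)
    set Δ : Matrix (Fin n) (Fin n) ℂ := W - Wb with hΔdef
    have hΔH : Δᴴ = Δ := by
      rw [hΔdef, Matrix.conjTranspose_sub, hWpd.isHermitian.eq, hWbPD.isHermitian.eq]
    set Mm : Matrix (Fin n) (Fin n) ℂ := Wb⁻¹ * Δ with hMdef
    have hMH : Mmᴴ = Δ * Wb⁻¹ := by
      rw [hMdef, Matrix.conjTranspose_mul, hΔH, hWbPD.inv.isHermitian.eq]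
    have hkey : W⁻¹ - Wb⁻¹ = -(Wb⁻¹ * Δ * Wb⁻¹) + Mm * W⁻¹ * Mmᴴ := by
      rw [hMH, hMdef, hΔdef]
      exact inv_sub_identity hW1 hW2 hB1 hB2
    have hWb2 : Wb⁻¹ * Wb⁻¹ =
        U * Matrix.diagonal (fun i : Fin n => ((max (σ i) ε : ℝ) : ℂ) ^ 2) * Uᴴ := by
      rw [hWbinv, conj_mul_conj hU', Matrix.diagonal_mul_diagonal]
      rw [show (fun i : Fin n => ((max (σ i) ε : ℝ) : ℂ) * ((max (σ i) ε : ℝ) : ℂ)) =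
          fun i : Fin n => ((max (σ i) ε : ℝ) : ℂ) ^ 2 from funext fun i => (sq _).symm]
    have hAmW : X * Xᴴ - Wb⁻¹ * Wb⁻¹ =
        U * Matrix.diagonal (fun i : Fin n =>
          ((σ i : ℝ) : ℂ) ^ 2 - ((max (σ i) ε : ℝ) : ℂ) ^ 2) * Uᴴ := by
      rw [hA, hWb2]
      rw [show Matrix.diagonal (fun i : Fin n =>
          ((σ i : ℝ) : ℂ) ^ 2 - ((max (σ i) ε : ℝ) : ℂ) ^ 2) =
          Matrix.diagonal (fun i : Fin n => ((σ i : ℝ) : ℂ) ^ 2) -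
          Matrix.diagonal (fun i : Fin n => ((max (σ i) ε : ℝ) : ℂ) ^ 2) from
        (Matrix.diagonal_sub _ _).symm]
      rw [Matrix.mul_sub, Matrix.sub_mul]
    -- the trace identity (complex level)
    have htr : Matrix.trace (W * (X * Xᴴ)) + Matrix.trace W⁻¹ -
        (Matrix.trace (Wb * (X * Xᴴ)) + Matrix.trace Wb⁻¹) =
        Matrix.trace (Δ * (X * Xᴴ - Wb⁻¹ * Wb⁻¹)) + Matrix.trace (Mm * W⁻¹ * Mmᴴ) := by
      have h1 : Matrix.trace (W * (X * Xᴴ)) - Matrix.trace (Wb * (X * Xᴴ)) =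
          Matrix.trace (Δ * (X * Xᴴ)) := by
        rw [← Matrix.trace_sub, ← Matrix.sub_mul]
      have h2 : Matrix.trace W⁻¹ - Matrix.trace Wb⁻¹ = Matrix.trace (W⁻¹ - Wb⁻¹) :=
        (Matrix.trace_sub _ _).symm
      have h3 : Matrix.trace (Wb⁻¹ * Δ * Wb⁻¹) = Matrix.trace (Δ * (Wb⁻¹ * Wb⁻¹)) := by
        rw [Matrix.trace_mul_cycle, ← Matrix.mul_assoc, Matrix.trace_mul_comm,
          Matrix.mul_assoc]
      have h4 : Matrix.trace (Δ * (X * Xᴴ)) - Matrix.trace (Δ * (Wb⁻¹ * Wb⁻¹)) =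
          Matrix.trace (Δ * (X * Xᴴ - Wb⁻¹ * Wb⁻¹)) := by
        rw [← Matrix.trace_sub, ← Matrix.mul_sub]
      calc Matrix.trace (W * (X * Xᴴ)) + Matrix.trace W⁻¹ -
            (Matrix.trace (Wb * (X * Xᴴ)) + Matrix.trace Wb⁻¹)
          = (Matrix.trace (W * (X * Xᴴ)) - Matrix.trace (Wb * (X * Xᴴ))) +
            (Matrix.trace W⁻¹ - Matrix.trace Wb⁻¹) := by ring
        _ = Matrix.trace (Δ * (X * Xᴴ)) + Matrix.trace (W⁻¹ - Wb⁻¹) := by rw [h1, h2]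
        _ = Matrix.trace (Δ * (X * Xᴴ)) +
            (-(Matrix.trace (Wb⁻¹ * Δ * Wb⁻¹)) + Matrix.trace (Mm * W⁻¹ * Mmᴴ)) := by
            rw [hkey, Matrix.trace_add, Matrix.trace_neg]
        _ = (Matrix.trace (Δ * (X * Xᴴ)) - Matrix.trace (Δ * (Wb⁻¹ * Wb⁻¹))) +
            Matrix.trace (Mm * W⁻¹ * Mmᴴ) := by rw [h3]; ring
        _ = Matrix.trace (Δ * (X * Xᴴ - Wb⁻¹ * Wb⁻¹)) + Matrix.trace (Mm * W⁻¹ * Mmᴴ) := by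
            rw [h4]
    -- first term as a real sum
    set G : Matrix (Fin n) (Fin n) ℂ := Uᴴ * Δ * U with hGdef
    have hT1 : Matrix.trace (Δ * (X * Xᴴ - Wb⁻¹ * Wb⁻¹)) =
        ∑ i, G i i * (((σ i : ℝ) : ℂ) ^ 2 - ((max (σ i) ε : ℝ) : ℂ) ^ 2) := by
      rw [hAmW]
      rw [show Δ * (U * Matrix.diagonal (fun i : Fin n =>
            ((σ i : ℝ) : ℂ) ^ 2 - ((max (σ i) ε : ℝ) : ℂ) ^ 2) * Uᴴ) =
          (Δ * U) * Matrix.diagonal (fun i : Fin n =>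
            ((σ i : ℝ) : ℂ) ^ 2 - ((max (σ i) ε : ℝ) : ℂ) ^ 2) * Uᴴ from by
        simp only [Matrix.mul_assoc]]
      rw [Matrix.trace_mul_cycle, ← Matrix.mul_assoc Uᴴ Δ U, ← hGdef]
      exact trace_mul_diag _ _
    have hT1re : (Matrix.trace (Δ * (X * Xᴴ - Wb⁻¹ * Wb⁻¹))).re =
        ∑ i, (G i i).re * ((σ i) ^ 2 - (max (σ i) ε) ^ 2) := by
      rw [hT1, Complex.re_sum]
      congr 1
      funext i
      rw [show (((σ i : ℝ) : ℂ) ^ 2 - ((max (σ i) ε : ℝ) : ℂ) ^ 2) =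
          (((σ i ^ 2 - (max (σ i) ε) ^ 2 : ℝ)) : ℂ) from by push_cast; ring]
      rw [Complex.mul_re, Complex.ofReal_re, Complex.ofReal_im]
      ring
    -- nonnegativity of the first term
    have hGterm : ∀ i, 0 ≤ (G i i).re * ((σ i) ^ 2 - (max (σ i) ε) ^ 2) := by
      intro i
      rcases le_or_gt ε (σ i) with h | h
      · rw [max_eq_left h]
        simp
      · have hEi : max (σ i) ε = ε := max_eq_right h.le
        have hfac : (σ i) ^ 2 - (max (σ i) ε) ^ 2 ≤ 0 := by
          rw [hEi]
          nlinarith [hσ i]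
        have hGii : G i i = (Uᴴ * W * U) i i - ((max (σ i) ε : ℝ) : ℂ)⁻¹ := by
          have hGsplit : G = Uᴴ * W * U -
              Matrix.diagonal (fun i : Fin n => ((max (σ i) ε : ℝ) : ℂ)⁻¹) := by
            rw [hGdef, hΔdef, Matrix.mul_sub, Matrix.sub_mul]
            congr 1
            rw [hWbdef]
            exact unconj hU' _
          rw [hGsplit]
          simp [Matrix.sub_apply, Matrix.diagonal_apply_eq]
        have hpsd := hWc.conjTranspose_mul_mul_same U
        have hdiag := psd_diag_re_nonneg hpsd i
        have hsimp : Uᴴ * (ε⁻¹ • (1 : Matrix (Fin n) (Fin n) ℂ) - W) * U =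
            ε⁻¹ • (1 : Matrix (Fin n) (Fin n) ℂ) - Uᴴ * W * U := by
          rw [Matrix.mul_sub, Matrix.sub_mul]
          congr 1
          rw [mul_smul_comm, smul_mul_assoc, Matrix.mul_one, hU']
        rw [hsimp] at hdiag
        have hentry : ((ε⁻¹ • (1 : Matrix (Fin n) (Fin n) ℂ) - Uᴴ * W * U) i i).re =
            ε⁻¹ - ((Uᴴ * W * U) i i).re := by
          simp only [Matrix.sub_apply, Matrix.smul_apply, Matrix.one_apply_eq,
            Complex.sub_re, Complex.real_smul, Complex.mul_re, Complex.ofReal_re,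
            Complex.ofReal_im, Complex.one_re, Complex.one_im]
          ring
        rw [hentry] at hdiag
        have hGre : (G i i).re ≤ 0 := by
          rw [hGii, Complex.sub_re, ← Complex.ofReal_inv, Complex.ofReal_re, hEi]
          linarith
        have := mul_nonneg (neg_nonneg.mpr hGre) (neg_nonneg.mpr hfac)
        nlinarith
    -- the second term
    have hWiPSD := hWpd.inv.posSemidef
    set N : Matrix (Fin n) (Fin n) ℂ := Mm * matSqrt W⁻¹ with hNdef
    have hNN : N * Nᴴ = Mm * W⁻¹ * Mmᴴ := by
      rw [hNdef, Matrix.conjTranspose_mul, matSqrt_herm hWiPSD]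
      rw [Matrix.mul_assoc Mm (matSqrt W⁻¹), ← Matrix.mul_assoc (matSqrt W⁻¹) (matSqrt W⁻¹),
        matSqrt_mul_self hWiPSD, ← Matrix.mul_assoc, Matrix.mul_assoc Mm W⁻¹, ← Matrix.mul_assoc]
    have hT2re : (Matrix.trace (Mm * W⁻¹ * Mmᴴ)).re = frobNorm N ^ 2 := by
      rw [← hNN]
      exact (frobNorm_sq N).symm
    -- assemble
    have hJW := Jfun_eq X hWpd
    have hJWb := Jfun_eq X hWbPD
    have hretr := congrArg Complex.re htr
    simp only [Complex.add_re, Complex.sub_re] at hretr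
    have hsum : 2 * Jfun X W - 2 * Jfun X Wb =
        (∑ i, (G i i).re * ((σ i) ^ 2 - (max (σ i) ε) ^ 2)) + frobNorm N ^ 2 := by
      rw [hJW, hJWb, ← hT1re, ← hT2re]
      linarith
    have hsumnn : 0 ≤ ∑ i, (G i i).re * ((σ i) ^ 2 - (max (σ i) ε) ^ 2) :=
      Finset.sum_nonneg fun i _ => hGterm i
    constructor
    · nlinarith [sq_nonneg (frobNorm N)]
    · intro heq
      have h0 : frobNorm N ^ 2 = 0 := by nlinarith [sq_nonneg (frobNorm N)]
      have hN0 : N = 0 := by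
        apply frobNorm_eq_zero
        rw [← frobNorm_sq]
        exact h0
      have hMm0 : Mm = 0 := by
        have h1 : Mm * W⁻¹ = 0 := by
          rw [show Mm * W⁻¹ = N * matSqrt W⁻¹ from by
            rw [hNdef, Matrix.mul_assoc Mm (matSqrt W⁻¹) (matSqrt W⁻¹), matSqrt_mul_self hWiPSD]]
          rw [hN0, Matrix.zero_mul]
        have h2 : Mm * W⁻¹ * W = 0 * W := by rw [h1]
        rwa [Matrix.mul_assoc, hW2, Matrix.mul_one, Matrix.zero_mul] at h2
      have hΔ0 : Δ = 0 := by
        have h5 : Wb * Mm = Δ := by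
          rw [hMdef, ← Matrix.mul_assoc, hB1, Matrix.one_mul]
        rw [← h5, hMm0, Matrix.mul_zero]
      have h6 : W - Wb = 0 := by rw [← hΔdef]; exact hΔ0
      exact sub_eq_zero.mp h6
  exact ⟨⟨hWbPD, hconstWb⟩, fun W hpd hc => (main W hpd hc).1,
    fun W hpd hc heq => (main W hpd hc).2 heq⟩


end IRLSM
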